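/- arXiv:2203.09074 — 2 statements merged into one kernel-verified Lean document; each statement's English description precedes it below -/
import Mathlib

section
/- Discrete energy conservation for the structure-preserving scheme with H = 0 (single spatial mode / 0-dimensional case): suppose real numbers φ⁰, φ¹, ψ⁰, ψ¹ satisfy (φ¹ − φ⁰)/Δt = ½(ψ¹ + ψ⁰) and (ψ¹ − ψ⁰)/Δt = −(m²/2)(φ¹ + φ⁰) − (λ/(p+1))·(|φ¹|^{p+1} − |φ⁰|^{p+1})/(φ¹ − φ⁰) (with the quotient interpreted as the discrete gradient and φ¹ ≠ φ⁰). Then the discrete energy E^ℓ = ½(ψ^ℓ)² + ½m²(φ^ℓ)² + (λ/(p+1))|φ^ℓ|^{p+1} satisfies E¹ = E⁰ exactly. -/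
theorem discrete_energy_conservation_0d (Δt m lam : ℝ) (hΔt : 0 < Δt) (p : ℕ) (hp : 2 ≤ p)
    (φ0 φ1 ψ0 ψ1 : ℝ) (hne : φ1 ≠ φ0)
    (h1 : (φ1 - φ0) / Δt = (1 / 2) * (ψ1 + ψ0))
    (h2 : (ψ1 - ψ0) / Δt = -(m ^ 2 / 2) * (φ1 + φ0)
        - (lam / (p + 1)) * ((|φ1| ^ (p + 1) - |φ0| ^ (p + 1)) / (φ1 - φ0))) :
    (1 / 2) * ψ1 ^ 2 + (1 / 2) * m ^ 2 * φ1 ^ 2 + (lam / (p + 1)) * |φ1| ^ (p + 1) =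
    (1 / 2) * ψ0 ^ 2 + (1 / 2) * m ^ 2 * φ0 ^ 2 + (lam / (p + 1)) * |φ0| ^ (p + 1) := by
  have hd : φ1 - φ0 ≠ 0 := sub_ne_zero.mpr hne
  have hp1 : ((p : ℝ) + 1) ≠ 0 := by positivity
  have key : ((φ1 - φ0) / Δt) * (ψ1 - ψ0) = ((ψ1 - ψ0) / Δt) * (φ1 - φ0) := by
    field_simp
  rw [h1, h2] at key
  field_simp at key
  have key2 : ((ψ1 + ψ0) * (ψ1 - ψ0) * (2 * ((p : ℝ) + 1))) * (φ1 - φ0) =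
      ((-(m ^ 2 * (φ1 + φ0) * (((p : ℝ) + 1) * (φ1 - φ0))) -
        2 * (lam * (|φ1| ^ (p + 1) - |φ0| ^ (p + 1)))) * 2) * (φ1 - φ0) := by
    linear_combination key * (2 * (φ1 - φ0))
  have key3 := mul_right_cancel₀ hd key2
  field_simp
  linear_combination key3 * (1 / 2)
end

section
/- Exact discrete energy conservation for the linear scheme (λ = 0), one spatial dimension, H = 0: if n-periodic sequences φ^{ℓ}, ψ^{ℓ} satisfy (φ^{ℓ+1}_k − φ^ℓ_k)/Δt = ½(ψ^{ℓ+1}_k + ψ^ℓ_k) and (ψ^{ℓ+1}_k − ψ^ℓ_k)/Δt = ½ δ¹δ¹(φ^{ℓ+1} + φ^ℓ)_k − (m²/2)(φ^{ℓ+1}_k + φ^ℓ_k), then H_C^{(ℓ+1)} = H_C^{(ℓ)}, where H_C^{(ℓ)} = ∑_k [½(ψ^ℓ_k)² + ½(δ¹φ^ℓ)_k² + ½m²(φ^ℓ_k)²]·Δx. -/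
/-- Central first difference with grid spacing `Δx`. -/
noncomputable def centralDiff (Δx : ℝ) (u : ℤ → ℝ) : ℤ → ℝ := fun k => (u (k + 1) - u (k - 1)) / (2 * Δx)

lemma sum_shift (n : ℕ) (f : ℤ → ℝ) (hf : ∀ k : ℤ, f (k + n) = f k) :
    ∑ k ∈ Finset.range n, f ((k : ℤ) + 1) = ∑ k ∈ Finset.range n, f k := by
  have h1 := Finset.sum_range_succ' (fun j : ℕ => f j) n
  have h2 := Finset.sum_range_succ (fun j : ℕ => f j) n
  have hfn : f ((n : ℕ) : ℤ) = f ((0 : ℕ) : ℤ) := by simpa using hf 0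
  have e : ∀ k : ℕ, f ((k : ℤ) + 1) = (fun j : ℕ => f j) (k + 1) := by
    intro k; push_cast; rfl
  simp only [e]
  linarith [h1, h2, hfn]

lemma sum_shift' (n : ℕ) (f : ℤ → ℝ) (hf : ∀ k : ℤ, f (k + n) = f k) :
    ∑ k ∈ Finset.range n, f ((k : ℤ) - 1) = ∑ k ∈ Finset.range n, f k := by
  have h := sum_shift n (fun k => f (k - 1)) (fun k => by
    show f (k + (n : ℤ) - 1) = f (k - 1); rw [show k + (n : ℤ) - 1 = (k - 1) + n by ring, hf])
  simp only [add_sub_cancel_right] at h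
  exact h.symm

lemma sbp (n : ℕ) (Δx : ℝ) (u v : ℤ → ℝ)
    (hu : ∀ k : ℤ, u (k + n) = u k) (hv : ∀ k : ℤ, v (k + n) = v k) :
    ∑ k ∈ Finset.range n, u k * centralDiff Δx v k
      = -∑ k ∈ Finset.range n, centralDiff Δx u k * v k := by
  have hF : ∀ k : ℤ, (fun j : ℤ => u (j - 1) * v j / (2 * Δx)) (k + n)
      = (fun j : ℤ => u (j - 1) * v j / (2 * Δx)) k := by
    intro k; simp only []
    rw [show k + (n : ℤ) - 1 = (k - 1) + n by ring, hu, hv]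
  have hG : ∀ k : ℤ, (fun j : ℤ => u (j + 1) * v j / (2 * Δx)) (k + n)
      = (fun j : ℤ => u (j + 1) * v j / (2 * Δx)) k := by
    intro k; simp only []
    rw [show k + (n : ℤ) + 1 = (k + 1) + n by ring, hu, hv]
  have s1 := sum_shift n (fun j : ℤ => u (j - 1) * v j / (2 * Δx)) hF
  have s2 := sum_shift' n (fun j : ℤ => u (j + 1) * v j / (2 * Δx)) hG
  simp only [add_sub_cancel_right] at s1
  simp only [sub_add_cancel] at s2
  have e1 : ∀ k ∈ Finset.range n, u k * centralDiff Δx v k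
      = u (k : ℤ) * v ((k : ℤ) + 1) / (2 * Δx) - u (k : ℤ) * v ((k : ℤ) - 1) / (2 * Δx) := by
    intro k _; simp only [centralDiff]; ring
  have e2 : ∀ k ∈ Finset.range n, centralDiff Δx u k * v k
      = u ((k : ℤ) + 1) * v (k : ℤ) / (2 * Δx) - u ((k : ℤ) - 1) * v (k : ℤ) / (2 * Δx) := by
    intro k _; simp only [centralDiff]; ring
  rw [Finset.sum_congr rfl e1, Finset.sum_congr rfl e2,
    Finset.sum_sub_distrib, Finset.sum_sub_distrib, s1, s2]
  ring

theorem linear_sps_energy_conservation (n : ℕ) (hn : 1 ≤ n) (Δt Δx m : ℝ)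
    (hΔt : 0 < Δt) (hΔx : 0 < Δx)
    (φ0 φ1 ψ0 ψ1 : ℤ → ℝ)
    (hφ0 : ∀ k : ℤ, φ0 (k + n) = φ0 k) (hφ1 : ∀ k : ℤ, φ1 (k + n) = φ1 k)
    (hψ0 : ∀ k : ℤ, ψ0 (k + n) = ψ0 k) (hψ1 : ∀ k : ℤ, ψ1 (k + n) = ψ1 k)
    (h1 : ∀ k : ℤ, (φ1 k - φ0 k) / Δt = (1 / 2) * (ψ1 k + ψ0 k))
    (h2 : ∀ k : ℤ, (ψ1 k - ψ0 k) / Δt =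
        (1 / 2) * centralDiff Δx (centralDiff Δx (fun j => φ1 j + φ0 j)) k
          - (m ^ 2 / 2) * (φ1 k + φ0 k)) :
    ∑ k ∈ Finset.range n,
        ((1 / 2) * (ψ1 k) ^ 2 + (1 / 2) * (centralDiff Δx φ1 k) ^ 2
          + (1 / 2) * m ^ 2 * (φ1 k) ^ 2) * Δx =
    ∑ k ∈ Finset.range n,
        ((1 / 2) * (ψ0 k) ^ 2 + (1 / 2) * (centralDiff Δx φ0 k) ^ 2
          + (1 / 2) * m ^ 2 * (φ0 k) ^ 2) * Δx := by
  have hΔt' : Δt ≠ 0 := ne_of_gt hΔt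
  set a : ℤ → ℝ := fun j => ψ1 j + ψ0 j with ha
  set b : ℤ → ℝ := fun j => φ1 j + φ0 j with hb
  -- rearranged scheme equations
  have hd : ∀ k : ℤ, φ1 k - φ0 k = Δt / 2 * a k := by
    intro k
    have := h1 k
    field_simp at this
    rw [ha]; linarith [this]
  have hs : ∀ k : ℤ, ψ1 k - ψ0 k
      = Δt * ((1 / 2) * centralDiff Δx (centralDiff Δx b) k - (m ^ 2 / 2) * b k) := by
    intro k
    have := h2 k
    field_simp at this
    rw [hb]; linarith [this]
  -- periodicity of a, b and centralDiff of periodic functions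
  have hA : ∀ k : ℤ, a (k + n) = a k := by
    intro k; simp only [ha, hψ0, hψ1]
  have hB : ∀ k : ℤ, b (k + n) = b k := by
    intro k; simp only [hb, hφ0, hφ1]
  have hDper : ∀ (u : ℤ → ℝ), (∀ k : ℤ, u (k + n) = u k) →
      ∀ k : ℤ, centralDiff Δx u (k + n) = centralDiff Δx u k := by
    intro u hu k
    simp only [centralDiff]
    rw [show k + (n : ℤ) + 1 = (k + 1) + n by ring,
      show k + (n : ℤ) - 1 = (k - 1) + n by ring, hu, hu]
  -- central diff of the time-differences
  have hDd : ∀ k : ℤ, centralDiff Δx φ1 k - centralDiff Δx φ0 k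
      = Δt / 2 * centralDiff Δx a k := by
    intro k
    simp only [centralDiff]
    linear_combination (2 * Δx)⁻¹ * hd (k + 1) - (2 * Δx)⁻¹ * hd (k - 1)
  have hDs : ∀ k : ℤ, centralDiff Δx φ1 k + centralDiff Δx φ0 k = centralDiff Δx b k := by
    intro k
    simp only [centralDiff, hb]
    ring
  -- pointwise energy difference
  rw [← sub_eq_zero, ← Finset.sum_sub_distrib]
  have key : ∀ k ∈ Finset.range n,
      ((1 / 2) * (ψ1 k) ^ 2 + (1 / 2) * (centralDiff Δx φ1 k) ^ 2
          + (1 / 2) * m ^ 2 * (φ1 k) ^ 2) * Δx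
        - ((1 / 2) * (ψ0 k) ^ 2 + (1 / 2) * (centralDiff Δx φ0 k) ^ 2
          + (1 / 2) * m ^ 2 * (φ0 k) ^ 2) * Δx
      = (Δx * Δt / 4) * (a k * centralDiff Δx (centralDiff Δx b) k
          + centralDiff Δx a k * centralDiff Δx b k) := by
    intro k _
    have e1 := hs (k : ℤ)
    have e2 := hd (k : ℤ)
    have e3 := hDd (k : ℤ)
    have e4 := hDs (k : ℤ)
    have haa : a (k : ℤ) = ψ1 k + ψ0 k := rfl
    have hbb : b (k : ℤ) = φ1 k + φ0 k := rfl
    linear_combination (Δx * (ψ1 (k : ℤ) + ψ0 (k : ℤ)) / 2) * e1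
      + (Δx * m ^ 2 * (φ1 (k : ℤ) + φ0 (k : ℤ)) / 2) * e2
      + (Δx * (centralDiff Δx φ1 (k : ℤ) + centralDiff Δx φ0 (k : ℤ)) / 2) * e3
      + (Δx * Δt / 4 * centralDiff Δx a (k : ℤ)) * e4
      + (Δx * Δt / 4 * centralDiff Δx (centralDiff Δx b) (k : ℤ)
          - Δx * Δt * m ^ 2 / 4 * b (k : ℤ)) * haa
      + (Δx * Δt * m ^ 2 / 4 * a (k : ℤ)) * hbb
  rw [Finset.sum_congr rfl key, ← Finset.mul_sum]
  have hsbp := sbp n Δx a (centralDiff Δx b) hA (hDper b hB)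
  rw [Finset.sum_add_distrib, hsbp]
  ring
end
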